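/- With the partition construction of G and B, set σ = Σ_{S : S induces a forest of G, E_r ⊆ S, |S ∩ E_ℓ| = n} det(B_S), and for x, y > 0 set Z(x,y) = Σ_{S : S induces a forest of G} x^{2|S ∩ E_r|} · y^{2|S ∩ E_ℓ|} · det(B_S). Suppose ε ∈ (0,1) and there is an index set S̃ inducing a forest of G with E_r ⊆ S̃, |S̃ ∩ E_ℓ| = n, and det(B_{S̃}) > 0; put y = (det(B + I) / det(B_{S̃})) · (4/ε) and x = (det(B + I) / det(B_{S̃})) · y^{2m − 2n} · (4/ε). Then x^{2m} · y^{2n} · σ ≤ Z(x,y) ≤ e^{ε/2} · x^{2m} · y^{2n} · σ. -/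

import Mathlib

open scoped Classical

/-- The principal minor of `A` on the index set `S` (equal to `1` when `S = ∅`). -/
noncomputable def principalMinor {ι : Type*} [DecidableEq ι]
    (A : Matrix ι ι ℝ) (S : Finset ι) : ℝ :=
  (A.submatrix (fun i : ↥S => (i : ι)) (fun i : ↥S => (i : ι))).det

/-- The edge of the graph `G` associated with an edge index in `Fin m ⊕ Fin m`:
the left edge `{v_{g j}, w_{g j, j}}` and the right edge `{w_{g j, j}, v_{g j + 1}}`. -/
def partEdge {n m : ℕ} (g : Fin m → Fin n) : (Fin m ⊕ Fin m) → Sym2 (Fin (n + 1) ⊕ Fin m)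
  | Sum.inl j => s(Sum.inl (g j).castSucc, Sum.inr j)
  | Sum.inr j => s(Sum.inr j, Sum.inl (g j).succ)

/-- The spanning subgraph of `G` whose edges are those indexed by `S ⊆ Fin m ⊕ Fin m`. -/
def partSubgraph {n m : ℕ} (g : Fin m → Fin n) (S : Finset (Fin m ⊕ Fin m)) :
    SimpleGraph (Fin (n + 1) ⊕ Fin m) :=
  SimpleGraph.fromEdgeSet (partEdge g '' ↑S)

/-- The matrix `B` of the construction: the left-left block is `A`, the right-right block is
the identity, and the off-diagonal blocks vanish. -/
def matB {m : ℕ} (A : Matrix (Fin m) (Fin m) ℝ) :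
    Matrix (Fin m ⊕ Fin m) (Fin m ⊕ Fin m) ℝ :=
  Matrix.of fun p q =>
    match p, q with
    | Sum.inl j₁, Sum.inl j₂ => A j₁ j₂
    | Sum.inr j, Sum.inr j' => if j = j' then 1 else 0
    | _, _ => 0

/-- The set `E_ℓ` of left edge indices. -/
def leftIdx (m : ℕ) : Finset (Fin m ⊕ Fin m) := Finset.univ.image Sum.inl

/-- The set `E_r` of right edge indices. -/
def rightIdx (m : ℕ) : Finset (Fin m ⊕ Fin m) := Finset.univ.image Sum.inr

section AuxDet
variable {ι : Type*} [Fintype ι] [DecidableEq ι]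

lemma psd_det_nonneg {M : Matrix ι ι ℝ} (hM : M.PosSemidef) : 0 ≤ M.det := by
  rw [hM.isHermitian.det_eq_prod_eigenvalues]
  exact Finset.prod_nonneg fun i _ => hM.eigenvalues_nonneg i

lemma principalMinor_nonneg {M : Matrix ι ι ℝ} (hM : M.PosSemidef) (S : Finset ι) :
    0 ≤ principalMinor M S :=
  psd_det_nonneg (hM.submatrix _)

lemma det_piecewise_one (M : Matrix ι ι ℝ) (s : Finset ι) :
    (Matrix.of (s.piecewise (M : ι → ι → ℝ) ((1 : Matrix ι ι ℝ) : ι → ι → ℝ))).det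
      = principalMinor M s := by
  classical
  rw [← Matrix.det_submatrix_equiv_self (Equiv.sumCompl (· ∈ s))]
  have : (Matrix.of (s.piecewise (M : ι → ι → ℝ) ((1 : Matrix ι ι ℝ) : ι → ι → ℝ))).submatrix
        (Equiv.sumCompl (· ∈ s)) (Equiv.sumCompl (· ∈ s)) =
      Matrix.fromBlocks (M.submatrix (fun i : ↥s => (i : ι)) (fun i : ↥s => (i : ι)))
          (Matrix.of fun (i : {a // a ∈ s}) (j : {a // ¬ a ∈ s}) => M i j) 0 1 := by
    ext i j
    cases i with
    | inl i =>
      cases j with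
      | inl j => simp [Matrix.submatrix_apply, Finset.piecewise, i.2, Matrix.fromBlocks]
      | inr j => simp [Matrix.submatrix_apply, Finset.piecewise, i.2, Matrix.fromBlocks]
    | inr i =>
      cases j with
      | inl j =>
        have : (i : ι) ≠ (j : ι) := fun h => i.2 (h ▸ j.2)
        simp [Matrix.submatrix_apply, Finset.piecewise, i.2, Matrix.fromBlocks,
          Matrix.one_apply, this]
      | inr j =>
        simp [Matrix.submatrix_apply, Finset.piecewise, i.2, Matrix.fromBlocks, Matrix.one_apply,
          Subtype.ext_iff]
  rw [this, Matrix.det_fromBlocks_zero₂₁]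
  simp [principalMinor]

lemma det_add_one_eq_sum (M : Matrix ι ι ℝ) :
    (M + 1).det = ∑ s : Finset ι, principalMinor M s := by
  have h := (Matrix.detRowAlternating (R := ℝ) (n := ι)).toMultilinearMap.map_add_univ
    (M : ι → ι → ℝ) ((1 : Matrix ι ι ℝ) : ι → ι → ℝ)
  refine h.trans ?_
  exact Finset.sum_congr rfl fun s _ => det_piecewise_one M s

lemma principalMinor_le_det_add_one {M : Matrix ι ι ℝ} (hM : M.PosSemidef) (s : Finset ι) :
    principalMinor M s ≤ (M + 1).det := by
  rw [det_add_one_eq_sum]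
  exact Finset.single_le_sum (fun i _ => principalMinor_nonneg hM i) (Finset.mem_univ s)

end AuxDet

section AuxMatB

lemma matB_eq {m : ℕ} (A : Matrix (Fin m) (Fin m) ℝ) :
    matB A = Matrix.fromBlocks A 0 0 (1 : Matrix (Fin m) (Fin m) ℝ) := by
  ext p q
  cases p <;> cases q <;> simp [matB, Matrix.fromBlocks, Matrix.one_apply]

lemma matB_posSemidef {m : ℕ} {A : Matrix (Fin m) (Fin m) ℝ} (hA : A.PosSemidef) :
    (matB A).PosSemidef := by
  rw [matB_eq]
  refine Matrix.PosSemidef.of_dotProduct_mulVec_nonneg ?_ ?_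
  · ext p q
    cases p <;> cases q <;>
      simp [Matrix.conjTranspose_apply, Matrix.fromBlocks, Matrix.one_apply, eq_comm] <;>
      exact congrFun (congrFun hA.1 _) _
  · intro z
    have hz : z = Sum.elim (z ∘ Sum.inl) (z ∘ Sum.inr) := by
      funext p; cases p <;> rfl
    rw [hz, star_trivial, Matrix.fromBlocks_mulVec, sumElim_dotProduct_sumElim]
    simp only [Sum.elim_comp_inl, Sum.elim_comp_inr]
    simp only [Matrix.zero_mulVec, add_zero, zero_add, Matrix.one_mulVec]
    have h1 := hA.dotProduct_mulVec_nonneg (z ∘ Sum.inl)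
    rw [star_trivial] at h1
    have h2 : 0 ≤ dotProduct (z ∘ Sum.inr) (z ∘ Sum.inr) :=
      Finset.sum_nonneg fun i _ => mul_self_nonneg _
    exact add_nonneg h1 h2

lemma matB_add_one_det {m : ℕ} (A : Matrix (Fin m) (Fin m) ℝ) :
    (matB A + 1).det = 2 ^ m * (A + 1).det := by
  rw [matB_eq, ← Matrix.fromBlocks_one, Matrix.fromBlocks_add, add_zero,
    Matrix.det_fromBlocks_zero₂₁]
  have : (1 + 1 : Matrix (Fin m) (Fin m) ℝ) = Matrix.diagonal (fun _ => 2) := by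
    ext i j; simp [Matrix.one_apply, Matrix.diagonal]; split <;> norm_num
  rw [this, Matrix.det_diagonal]
  simp [mul_comm]

def blockIndexEquiv {α β : Type*} [Fintype α] [Fintype β] [DecidableEq α] [DecidableEq β]
    (S : Finset (α ⊕ β)) :
    ↥(Finset.univ.filter (fun j : α => Sum.inl j ∈ S)) ⊕
      ↥(Finset.univ.filter (fun j : β => Sum.inr j ∈ S)) ≃ ↥S where
  toFun := Sum.elim
    (fun j => ⟨Sum.inl j.1, by have := j.2; simp only [Finset.mem_filter] at this; exact this.2⟩)
    (fun j => ⟨Sum.inr j.1, by have := j.2; simp only [Finset.mem_filter] at this; exact this.2⟩)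
  invFun := fun q => match q with
    | ⟨Sum.inl j, h⟩ => Sum.inl ⟨j, by simp [h]⟩
    | ⟨Sum.inr j, h⟩ => Sum.inr ⟨j, by simp [h]⟩
  left_inv := by rintro (⟨j, hj⟩ | ⟨j, hj⟩) <;> rfl
  right_inv := by rintro ⟨(j | j), hj⟩ <;> rfl

lemma principalMinor_matB {m : ℕ} (A : Matrix (Fin m) (Fin m) ℝ) (S : Finset (Fin m ⊕ Fin m)) :
    principalMinor (matB A) S
      = principalMinor A (Finset.univ.filter (fun j => Sum.inl j ∈ S)) := by
  classical
  rw [principalMinor, ← Matrix.det_submatrix_equiv_self (blockIndexEquiv S),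
    Matrix.submatrix_submatrix]
  have hsub : (matB A).submatrix
        ((fun i : ↥S => (i : Fin m ⊕ Fin m)) ∘ (blockIndexEquiv S))
        ((fun i : ↥S => (i : Fin m ⊕ Fin m)) ∘ (blockIndexEquiv S))
      = Matrix.fromBlocks
          (A.submatrix
            (fun i : ↥(Finset.univ.filter (fun j => Sum.inl j ∈ S)) => (i : Fin m))
            (fun i : ↥(Finset.univ.filter (fun j => Sum.inl j ∈ S)) => (i : Fin m))) 0 0 1 := by
    ext i j
    cases i with
    | inl i =>
      cases j with
      | inl j => rfl
      | inr j => rfl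
    | inr i =>
      cases j with
      | inl j => rfl
      | inr j =>
        show (if (i : Fin m) = (j : Fin m) then (1:ℝ) else 0) = _
        rw [Matrix.fromBlocks_apply₂₂]
        by_cases h : (i : Fin m) = (j : Fin m)
        · have : i = j := Subtype.ext h
          subst this; simp
        · rw [if_neg h, Matrix.one_apply_ne (fun e => h (congrArg Subtype.val e))]
  rw [hsub, Matrix.det_fromBlocks_zero₂₁]
  simp [principalMinor]

lemma principalMinor_matB_le {m : ℕ} {A : Matrix (Fin m) (Fin m) ℝ} (hA : A.PosSemidef)
    (S : Finset (Fin m ⊕ Fin m)) : principalMinor (matB A) S ≤ (A + 1).det := by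
  rw [principalMinor_matB]
  exact principalMinor_le_det_add_one hA _

end AuxMatB

section AuxGraph

lemma partSubgraph_adj {n m : ℕ} (g : Fin m → Fin n) (S : Finset (Fin m ⊕ Fin m))
    {e : Fin m ⊕ Fin m} (he : e ∈ S) {a b : Fin (n + 1) ⊕ Fin m}
    (hab : partEdge g e = s(a, b)) (hne : a ≠ b) : (partSubgraph g S).Adj a b := by
  rw [partSubgraph, SimpleGraph.fromEdgeSet_adj]
  exact ⟨⟨e, he, hab⟩, hne⟩

lemma card_left_le {n m : ℕ} (g : Fin m → Fin n) (S : Finset (Fin m ⊕ Fin m))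
    (hS : (partSubgraph g S).IsAcyclic) (hr : rightIdx m ⊆ S) :
    (S ∩ leftIdx m).card ≤ n := by
  classical
  have hinj : Set.InjOn (Sum.elim g g) ↑(S ∩ leftIdx m) := by
    rintro e₁ he₁ e₂ he₂ heq
    simp only [Finset.coe_inter, Set.mem_inter_iff, Finset.mem_coe, leftIdx,
      Finset.mem_image, Finset.mem_univ, true_and] at he₁ he₂
    obtain ⟨hS₁, j, rfl⟩ : e₁ ∈ S ∧ ∃ j, Sum.inl j = e₁ := he₁
    obtain ⟨hS₂, j', rfl⟩ : e₂ ∈ S ∧ ∃ j', Sum.inl j' = e₂ := he₂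
    simp only [Sum.elim_inl] at heq
    by_contra hne
    have hjj' : j ≠ j' := fun h => hne (by rw [h])
    have hrj : Sum.inr j ∈ S := hr (by simp [rightIdx])
    have hrj' : Sum.inr j' ∈ S := hr (by simp [rightIdx])
    set a : Fin (n + 1) ⊕ Fin m := Sum.inl (g j).castSucc with ha
    set b : Fin (n + 1) ⊕ Fin m := Sum.inr j with hb
    set c : Fin (n + 1) ⊕ Fin m := Sum.inl (g j).succ with hc
    set d : Fin (n + 1) ⊕ Fin m := Sum.inr j' with hd
    have hcs : (g j).castSucc ≠ (g j).succ := Fin.castSucc_lt_succ.ne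
    have adj1 : (partSubgraph g S).Adj a b :=
      partSubgraph_adj g S hS₁ rfl (by simp [ha, hb])
    have adj2 : (partSubgraph g S).Adj b c :=
      partSubgraph_adj g S hrj rfl (by simp [hb, hc])
    have adj3 : (partSubgraph g S).Adj c d := by
      have h : partEdge g (Sum.inr j') = s(d, c) := by
        simp only [partEdge, hd, hc, heq]
      exact (partSubgraph_adj g S hrj' h (by simp [hc, hd])).symm
    have adj4 : (partSubgraph g S).Adj d a := by
      have h : partEdge g (Sum.inl j') = s(a, d) := by
        simp only [partEdge, ha, hd, heq]
      exact (partSubgraph_adj g S hS₂ h (by simp [ha, hd])).symm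
    have hw : ((SimpleGraph.Walk.cons adj1 (SimpleGraph.Walk.cons adj2
        (SimpleGraph.Walk.cons adj3 (SimpleGraph.Walk.cons adj4 SimpleGraph.Walk.nil)))) :
        (partSubgraph g S).Walk a a).IsCycle := by
      rw [SimpleGraph.Walk.isCycle_def]
      refine ⟨?_, by simp, ?_⟩
      · rw [SimpleGraph.Walk.isTrail_def]
        simp only [SimpleGraph.Walk.edges_cons, SimpleGraph.Walk.edges_nil]
        have h1 : a ≠ b := by simp [ha, hb]
        have h2 : a ≠ c := by simp [ha, hc, hcs]
        have h3 : a ≠ d := by simp [ha, hd]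
        have h4 : b ≠ c := by simp [hb, hc]
        have h5 : b ≠ d := by simp [hb, hd, hjj']
        have h6 : c ≠ d := by simp [hc, hd]
        simp [List.nodup_cons, Sym2.eq_iff, h1, h2, h3, h4, h5, h6, h1.symm, h2.symm, h3.symm,
          h4.symm, h5.symm, h6.symm]
      · simp only [SimpleGraph.Walk.support_cons, SimpleGraph.Walk.support_nil, List.tail_cons]
        have h2 : a ≠ c := by simp [ha, hc, hcs]
        have h3 : a ≠ d := by simp [ha, hd]
        have h4 : b ≠ c := by simp [hb, hc]
        have h5 : b ≠ d := by simp [hb, hd, hjj']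
        have h6 : c ≠ d := by simp [hc, hd]
        have h1 : a ≠ b := by simp [ha, hb]
        simp [List.nodup_cons, h1.symm, h2.symm, h3.symm, h4, h5, h6]
    exact hS _ hw
  calc (S ∩ leftIdx m).card ≤ (Finset.univ : Finset (Fin n)).card :=
        Finset.card_le_card_of_injOn (Sum.elim g g) (fun _ _ => Finset.mem_univ _) hinj
    _ = n := by simp

lemma card_rightIdx (m : ℕ) : (rightIdx m).card = m := by
  rw [rightIdx, Finset.card_image_of_injective _ Sum.inr_injective]; simp

lemma card_leftIdx (m : ℕ) : (leftIdx m).card = m := by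
  rw [leftIdx, Finset.card_image_of_injective _ Sum.inl_injective]; simp

end AuxGraph

/-- For the partition construction, with `σ` the sum of `det (B_S)` over forests containing
`E_r` with `|S ∩ E_ℓ| = n`, and `Z x y` the forest DPP normalizing constant of the rescaled
matrix, the choices `y = det(B + I)/det(B_{S̃}) · (4/ε)` and
`x = det(B + I)/det(B_{S̃}) · y^{2m-2n} · (4/ε)` give
`x^{2m} y^{2n} σ ≤ Z x y ≤ e^{ε/2} x^{2m} y^{2n} σ`. -/
theorem part_forest_Z_bounds {n m : ℕ} (hn : 1 ≤ n) (hm : 1 ≤ m) (hnm : n ≤ m)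
    (g : Fin m → Fin n) (hg : Function.Surjective g)
    (A : Matrix (Fin m) (Fin m) ℝ) (hA : A.PosSemidef)
    (ε : ℝ) (hε0 : 0 < ε) (hε1 : ε < 1)
    (St : Finset (Fin m ⊕ Fin m)) (hSt : (partSubgraph g St).IsAcyclic)
    (hStr : rightIdx m ⊆ St) (hStl : (St ∩ leftIdx m).card = n)
    (hStpos : 0 < principalMinor (matB A) St)
    (x y σ : ℝ) (Z : ℝ → ℝ → ℝ)
    (hy : y = (matB A + 1).det / principalMinor (matB A) St * (4 / ε))
    (hx : x = (matB A + 1).det / principalMinor (matB A) St * y ^ (2 * m - 2 * n) * (4 / ε))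
    (hσ : σ = ∑ S ∈ Finset.univ.filter (fun S : Finset (Fin m ⊕ Fin m) =>
        (partSubgraph g S).IsAcyclic ∧ rightIdx m ⊆ S ∧ (S ∩ leftIdx m).card = n),
      principalMinor (matB A) S)
    (hZ : ∀ s t : ℝ, Z s t = ∑ S ∈ Finset.univ.filter (fun S : Finset (Fin m ⊕ Fin m) =>
        (partSubgraph g S).IsAcyclic),
      s ^ (2 * (S ∩ rightIdx m).card) * t ^ (2 * (S ∩ leftIdx m).card) *
        principalMinor (matB A) S) :
    x ^ (2 * m) * y ^ (2 * n) * σ ≤ Z x y ∧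
      Z x y ≤ Real.exp (ε / 2) * (x ^ (2 * m) * y ^ (2 * n) * σ) := by
  classical
  obtain ⟨k, hk⟩ : ∃ k, m = n + k := ⟨m - n, by omega⟩
  have hBpsd : (matB A).PosSemidef := matB_posSemidef hA
  have hpm0 : ∀ S : Finset (Fin m ⊕ Fin m), 0 ≤ principalMinor (matB A) S :=
    fun S => principalMinor_nonneg hBpsd S
  obtain ⟨dA, hdA⟩ : ∃ d : ℝ, (A + 1).det = d := ⟨_, rfl⟩
  have hdApos : 0 < dA := hdA ▸ (Matrix.PosDef.posSemidef_add hA Matrix.PosDef.one).det_pos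
  have hpmle : ∀ S : Finset (Fin m ⊕ Fin m), principalMinor (matB A) S ≤ dA :=
    fun S => hdA ▸ principalMinor_matB_le hA S
  obtain ⟨P, hP⟩ : ∃ p : ℝ, principalMinor (matB A) St = p := ⟨_, rfl⟩
  have hPpos : 0 < P := hP ▸ hStpos
  have hPle : P ≤ dA := hP ▸ hpmle St
  have hKdet : (matB A + 1).det = 2 ^ m * dA := by rw [matB_add_one_det A, hdA]
  rw [hP] at hy hx
  set D : ℝ := 2 ^ m * dA / P with hD
  have hDpos : 0 < D := by positivity
  have h2m1 : (1:ℝ) ≤ 2 ^ m := one_le_pow₀ (by norm_num : (1:ℝ) ≤ 2)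
  have hD1 : 1 ≤ D := by
    rw [hD, le_div_iff₀ hPpos, one_mul]
    calc P ≤ dA := hPle
      _ = 1 * dA := (one_mul dA).symm
      _ ≤ 2 ^ m * dA := by gcongr
  have hε4 : 0 < 4 / ε := by positivity
  have hε41 : 1 ≤ 4 / ε := by
    rw [le_div_iff₀ hε0]; linarith
  have hy' : y = D * (4 / ε) := by rw [hy, hKdet, hD]
  have hypos : 0 < y := by rw [hy']; positivity
  have hy1 : 1 ≤ y := by
    rw [hy']; calc (1:ℝ) = 1 * 1 := (one_mul 1).symm
      _ ≤ D * (4 / ε) := by gcongr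
  have h2mn : 2 * m - 2 * n = 2 * k := by omega
  have hx' : x = D * y ^ (2 * k) * (4 / ε) := by rw [hx, hKdet, hD, h2mn]
  have hxpos : 0 < x := by rw [hx']; positivity
  have hx1 : 1 ≤ x := by
    rw [hx']
    calc (1:ℝ) = 1 * 1 * 1 := by ring
      _ ≤ D * y ^ (2 * k) * (4 / ε) := by gcongr; exact one_le_pow₀ hy1
  have hDne : D ≠ 0 := ne_of_gt hDpos
  have hεne : ε ≠ 0 := ne_of_gt hε0
  set t : ℝ := ε ^ 2 / (16 * D ^ 2) with ht
  have htpos : 0 < t := by positivity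
  have key1 : t * y ^ 2 = 1 := by
    rw [ht, hy']; field_simp; ring
  have hxy : x = y * y ^ (2 * k) := by rw [hx', hy']; ring
  have key2 : t * x ^ 2 = y ^ (4 * k) := by
    calc t * x ^ 2 = t * y ^ 2 * (y ^ (2 * k)) ^ 2 := by rw [hxy]; ring
      _ = (y ^ (2 * k)) ^ 2 := by rw [key1, one_mul]
      _ = y ^ (4 * k) := by rw [← pow_mul]; congr 1; ring
  set X : ℝ := x ^ (2 * m) * y ^ (2 * n) with hX
  have hXpos : 0 < X := by positivity
  set 𝒢 : Finset (Finset (Fin m ⊕ Fin m)) := Finset.univ.filter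
      (fun S : Finset (Fin m ⊕ Fin m) =>
        (partSubgraph g S).IsAcyclic ∧ rightIdx m ⊆ S ∧ (S ∩ leftIdx m).card = n) with h𝒢
  set ℱ : Finset (Finset (Fin m ⊕ Fin m)) := Finset.univ.filter
      (fun S : Finset (Fin m ⊕ Fin m) => (partSubgraph g S).IsAcyclic) with hℱ
  have h𝒢ℱ : 𝒢 ⊆ ℱ := by
    intro S hS'
    simp only [h𝒢, hℱ, Finset.mem_filter, Finset.mem_univ, true_and] at hS' ⊢
    exact hS'.1
  have hStmem : St ∈ 𝒢 := by
    simp only [h𝒢, Finset.mem_filter, Finset.mem_univ, true_and]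
    exact ⟨hSt, hStr, hStl⟩
  have hσP : P ≤ σ := by
    rw [hσ]
    exact hP ▸ Finset.single_le_sum (fun S _ => hpm0 S) hStmem
  have hσpos : 0 < σ := lt_of_lt_of_le hPpos hσP
  set f : Finset (Fin m ⊕ Fin m) → ℝ := fun S =>
    x ^ (2 * (S ∩ rightIdx m).card) * y ^ (2 * (S ∩ leftIdx m).card) *
      principalMinor (matB A) S with hf
  have hgood : ∑ S ∈ 𝒢, f S = X * σ := by
    rw [hσ, Finset.mul_sum]
    refine Finset.sum_congr rfl fun S hSmem => ?_
    simp only [h𝒢, Finset.mem_filter, Finset.mem_univ, true_and] at hSmem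
    obtain ⟨-, hrS, hlS⟩ := hSmem
    have hr : (S ∩ rightIdx m).card = m := by
      rw [Finset.inter_eq_right.mpr hrS, card_rightIdx]
    simp only [hf]
    rw [hr, hlS, hX, mul_assoc]
  have hbad_le : ∀ S ∈ ℱ \ 𝒢, f S ≤ t * X * dA := by
    intro S hSmem
    obtain ⟨hSF, hSG⟩ := Finset.mem_sdiff.mp hSmem
    simp only [hℱ, Finset.mem_filter, Finset.mem_univ, true_and] at hSF
    simp only [h𝒢, Finset.mem_filter, Finset.mem_univ, true_and] at hSG
    have hrm : (S ∩ rightIdx m).card ≤ m :=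
      le_trans (Finset.card_le_card Finset.inter_subset_right) (card_rightIdx m).le
    have hlm : (S ∩ leftIdx m).card ≤ m :=
      le_trans (Finset.card_le_card Finset.inter_subset_right) (card_leftIdx m).le
    have hwb : x ^ (2 * (S ∩ rightIdx m).card) * y ^ (2 * (S ∩ leftIdx m).card) ≤ t * X := by
      by_cases hc : rightIdx m ⊆ S
      · have hreq : (S ∩ rightIdx m).card = m := by
          rw [Finset.inter_eq_right.mpr hc, card_rightIdx]
        have hln : (S ∩ leftIdx m).card ≤ n := card_left_le g S hSF hc
        have hlne : (S ∩ leftIdx m).card ≠ n := fun h => hSG ⟨hSF, hc, h⟩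
        have hRHS : t * X = x ^ (2 * m) * y ^ (2 * n - 2) := by
          rw [hX, show 2 * n = 2 * n - 2 + 2 from by omega, pow_add]
          calc t * (x ^ (2 * m) * (y ^ (2 * n - 2) * y ^ 2))
              = x ^ (2 * m) * y ^ (2 * n - 2) * (t * y ^ 2) := by ring
            _ = x ^ (2 * m) * y ^ (2 * n - 2) := by rw [key1, mul_one]
        rw [hRHS, hreq]
        gcongr
        · omega
      · have hrlt : (S ∩ rightIdx m).card < m := by
          rcases lt_or_eq_of_le hrm with h | h
          · exact h
          · exfalso
            apply hc
            have heq2 : S ∩ rightIdx m = rightIdx m :=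
              Finset.eq_of_subset_of_card_le Finset.inter_subset_right
                (by rw [card_rightIdx]; exact h.ge)
            intro e he
            have : e ∈ S ∩ rightIdx m := by rw [heq2]; exact he
            exact (Finset.mem_inter.mp this).1
        have hRHS : t * X = x ^ (2 * m - 2) * y ^ (2 * n + 4 * k) := by
          rw [hX, show 2 * m = 2 * m - 2 + 2 from by omega, pow_add, pow_add]
          calc t * (x ^ (2 * m - 2) * x ^ 2 * y ^ (2 * n))
              = x ^ (2 * m - 2) * y ^ (2 * n) * (t * x ^ 2) := by ring
            _ = x ^ (2 * m - 2) * y ^ (2 * n) * y ^ (4 * k) := by rw [key2]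
            _ = x ^ (2 * m - 2) * (y ^ (2 * n) * y ^ (4 * k)) := by ring
        rw [hRHS]
        gcongr
        · omega
        · omega
    have h1 : f S ≤ x ^ (2 * (S ∩ rightIdx m).card) * y ^ (2 * (S ∩ leftIdx m).card) * dA := by
      simp only [hf]
      have h2 := hpmle S
      have h0 : (0:ℝ) ≤ x ^ (2 * (S ∩ rightIdx m).card) * y ^ (2 * (S ∩ leftIdx m).card) := by
        positivity
      exact mul_le_mul_of_nonneg_left h2 h0
    calc f S ≤ x ^ (2 * (S ∩ rightIdx m).card) * y ^ (2 * (S ∩ leftIdx m).card) * dA := h1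
      _ ≤ t * X * dA := mul_le_mul_of_nonneg_right hwb (le_of_lt hdApos)
  have hcard : (((ℱ \ 𝒢).card : ℝ)) ≤ 2 ^ (2 * m) := by
    have h1 : (ℱ \ 𝒢).card ≤ Fintype.card (Finset (Fin m ⊕ Fin m)) := Finset.card_le_univ _
    have h2 : Fintype.card (Finset (Fin m ⊕ Fin m)) = 2 ^ (2 * m) := by
      rw [Fintype.card_finset, Fintype.card_sum, Fintype.card_fin]
      congr 1; omega
    calc (((ℱ \ 𝒢).card : ℝ)) ≤ (Fintype.card (Finset (Fin m ⊕ Fin m)) : ℝ) := by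
          exact_mod_cast h1
      _ = 2 ^ (2 * m) := by rw [h2]; push_cast; ring
  have hbadsum : ∑ S ∈ ℱ \ 𝒢, f S ≤ ε / 2 * (X * σ) := by
    have h1 : ∑ S ∈ ℱ \ 𝒢, f S ≤ (((ℱ \ 𝒢).card : ℝ)) * (t * X * dA) := by
      have h2 := Finset.sum_le_card_nsmul (ℱ \ 𝒢) f (t * X * dA) hbad_le
      rwa [nsmul_eq_mul] at h2
    have hb0 : (0:ℝ) ≤ t * X * dA := by positivity
    have h2 : (((ℱ \ 𝒢).card : ℝ)) * (t * X * dA) ≤ 2 ^ (2 * m) * (t * X * dA) :=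
      mul_le_mul_of_nonneg_right hcard hb0
    have h3 : (2:ℝ) ^ (2 * m) * (t * X * dA) ≤ ε / 2 * (X * σ) := by
      have hexp2 : (2:ℝ) ^ (2 * m) = (2 ^ m) ^ 2 := by
        rw [← pow_mul]; congr 1; ring
      have ht' : t = ε ^ 2 * P ^ 2 / (16 * (2 ^ m) ^ 2 * dA ^ 2) := by
        rw [ht, hD]; field_simp
      rw [hexp2, ht']
      have e1 : ((2:ℝ) ^ m) ^ 2 * (ε ^ 2 * P ^ 2 / (16 * (2 ^ m) ^ 2 * dA ^ 2) * X * dA)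
          = ε ^ 2 * P ^ 2 * X / (16 * dA) := by
        have h2mne : ((2:ℝ) ^ m) ≠ 0 := by positivity
        field_simp
      rw [e1, div_le_iff₀ (by positivity)]
      have hεP : ε * P ≤ dA := by
        calc ε * P ≤ 1 * P := mul_le_mul_of_nonneg_right hε1.le hPpos.le
          _ = P := one_mul P
          _ ≤ dA := hPle
      have h4 : (ε * P) * P ≤ dA * σ := mul_le_mul hεP hσP hPpos.le hdApos.le
      have hεX : (0:ℝ) ≤ ε * X := mul_nonneg hε0.le hXpos.le
      have h5 : (ε * X) * ((ε * P) * P) ≤ (ε * X) * (dA * σ) :=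
        mul_le_mul_of_nonneg_left h4 hεX
      have h8 : (0:ℝ) ≤ (ε * X) * (dA * σ) :=
        mul_nonneg hεX (mul_nonneg hdApos.le hσpos.le)
      calc ε ^ 2 * P ^ 2 * X = (ε * X) * ((ε * P) * P) := by ring
        _ ≤ (ε * X) * (dA * σ) := h5
        _ ≤ 8 * ((ε * X) * (dA * σ)) := le_mul_of_one_le_left h8 (by norm_num)
        _ = ε / 2 * (X * σ) * (16 * dA) := by ring
    exact le_trans h1 (le_trans h2 h3)
  have hbad0 : 0 ≤ ∑ S ∈ ℱ \ 𝒢, f S := by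
    refine Finset.sum_nonneg fun S _ => ?_
    simp only [hf]
    have h6 := hpm0 S
    positivity
  have hZf : Z x y = ∑ S ∈ ℱ, f S := hZ x y
  have hZsplit : Z x y = ∑ S ∈ ℱ \ 𝒢, f S + ∑ S ∈ 𝒢, f S := by
    rw [hZf, ← Finset.sum_sdiff h𝒢ℱ]
  constructor
  · rw [hZsplit, hgood]
    calc x ^ (2 * m) * y ^ (2 * n) * σ = X * σ := by rw [hX]
      _ ≤ ∑ S ∈ ℱ \ 𝒢, f S + X * σ := le_add_of_nonneg_left hbad0
  · rw [hZsplit, hgood]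
    have hexp : ε / 2 + 1 ≤ Real.exp (ε / 2) := Real.add_one_le_exp (ε / 2)
    have hXσ : 0 ≤ X * σ := le_of_lt (mul_pos hXpos hσpos)
    calc ∑ S ∈ ℱ \ 𝒢, f S + X * σ ≤ ε / 2 * (X * σ) + X * σ :=
          add_le_add hbadsum le_rfl
      _ = (ε / 2 + 1) * (X * σ) := by ring
      _ ≤ Real.exp (ε / 2) * (X * σ) := mul_le_mul_of_nonneg_right hexp hXσ
      _ = Real.exp (ε / 2) * (x ^ (2 * m) * y ^ (2 * n) * σ) := by rw [hX, mul_assoc]
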